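/- Let X be a finite set with #X ≥ 2 and let C denote the set of cyclically reduced elements of F(X). If S ⊆ C is exponentially C-generic, then the set S' := {w ∈ F(X) : the cyclic reduction of w lies in S} is exponentially F(X)-generic. -/

import Mathlib

/-! Common definitions: cyclic length, Whitehead automorphisms, the sets TS, TS', L(ε),
balls, and exponential genericity in the free group F(X). -/

/-- The cyclic length ‖w‖_X : the minimum of |g w g⁻¹|_X over g ∈ F(X). -/
noncomputable def cyclicLength {X : Type} [DecidableEq X] (w : FreeGroup X) : ℕ :=
  sInf (Set.range fun g : FreeGroup X => FreeGroup.norm (g * w * g⁻¹))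

/-- w is cyclically reduced if |w|_X = ‖w‖_X. -/
def CyclicallyReduced {X : Type} [DecidableEq X] (w : FreeGroup X) : Prop :=
  FreeGroup.norm w = cyclicLength w

/-- The set X^± = X ∪ X⁻¹ of letters, viewed inside F(X). -/
def Xpm (X : Type) : Set (FreeGroup X) :=
  (Set.range fun x : X => FreeGroup.of x) ∪ (Set.range fun x : X => (FreeGroup.of x)⁻¹)

/-- σ is a type I (relabeling) Whitehead automorphism: there is a bijection π of X^±
commuting with inversion such that σ(x) = π(x) for all x ∈ X. -/
def IsTypeI {X : Type} (σ : MulAut (FreeGroup X)) : Prop :=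
  ∃ π : FreeGroup X → FreeGroup X,
    Set.BijOn π (Xpm X) (Xpm X) ∧
    (∀ x ∈ Xpm X, π x⁻¹ = (π x)⁻¹) ∧
    (∀ x : X, σ (FreeGroup.of x) = π (FreeGroup.of x))

/-- σ is a type II Whitehead automorphism: there is a ∈ X^± with σ(a) = a and
σ(x) ∈ {x, xa, a⁻¹x, a⁻¹xa} for every x ∈ X^±. -/
def IsTypeII {X : Type} (σ : MulAut (FreeGroup X)) : Prop :=
  ∃ a ∈ Xpm X, σ a = a ∧
    ∀ x ∈ Xpm X, σ x = x ∨ σ x = x * a ∨ σ x = a⁻¹ * x ∨ σ x = a⁻¹ * x * a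

/-- σ is inner if it is conjugation by some element of F(X). -/
def IsInnerAut {X : Type} (σ : MulAut (FreeGroup X)) : Prop :=
  ∃ g : FreeGroup X, σ = MulAut.conj g

/-- w is a proper power if w = z^r for some z and some integer r ≥ 2. -/
def IsProperPower {X : Type} (w : FreeGroup X) : Prop :=
  ∃ z : FreeGroup X, ∃ r : ℕ, 2 ≤ r ∧ w = z ^ r

/-- TS is the set of cyclically reduced w that are not proper powers, whose cyclic length
is strictly increased by every non-inner type II Whitehead automorphism, and whose
conjugacy class is fixed by no non-identity type I Whitehead automorphism. -/
def TS (X : Type) [DecidableEq X] : Set (FreeGroup X) :=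
  {w | CyclicallyReduced w ∧ ¬ IsProperPower w ∧
    (∀ τ : MulAut (FreeGroup X), IsTypeII τ → ¬ IsInnerAut τ →
      cyclicLength w < cyclicLength (τ w)) ∧
    (∀ σ : MulAut (FreeGroup X), IsTypeI σ → σ ≠ 1 → ¬ IsConj w (σ w))}

/-- The set of elements of F(X) whose cyclic reduction lies in S. -/
def cyclicPreimage {X : Type} [DecidableEq X] (S : Set (FreeGroup X)) : Set (FreeGroup X) :=
  {w | ∃ g u : FreeGroup X, u ∈ S ∧ CyclicallyReduced u ∧ w = g * u * g⁻¹ ∧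
    FreeGroup.norm w = 2 * FreeGroup.norm g + FreeGroup.norm u}

/-- TS' is the set of elements of F(X) whose cyclic reduction lies in TS. -/
def TS' (X : Type) [DecidableEq X] : Set (FreeGroup X) :=
  cyclicPreimage (TS X)

/-- The ball B_n = {w ∈ F(X) : |w|_X ≤ n}. -/
def ballF (X : Type) [DecidableEq X] (n : ℕ) : Set (FreeGroup X) :=
  {w | FreeGroup.norm w ≤ n}

/-- S is exponentially T-generic: there are C > 0 and s ∈ (0,1) with
#((T∖S) ∩ B_n) ≤ C·s^n·#(T ∩ B_n) for all n. -/
def ExpGeneric {X : Type} [DecidableEq X] (S T : Set (FreeGroup X)) : Prop :=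
  ∃ C : ℝ, 0 < C ∧ ∃ s : ℝ, 0 < s ∧ s < 1 ∧
    ∀ n : ℕ, (((T \ S) ∩ ballF X n).ncard : ℝ) ≤ C * s ^ n * ((T ∩ ballF X n).ncard : ℝ)

/-- L(ε): the set of cyclically reduced w of length n ≥ 1 all of whose one-letter
frequencies lie in (1/(2N) − ε, 1/(2N) + ε) and all of whose cyclic two-letter
frequencies (for y ≠ x⁻¹) lie in (1/(2N(2N−1)) − ε, 1/(2N(2N−1)) + ε). -/
def Lset (X : Type) [Fintype X] [DecidableEq X] (ε : ℝ) : Set (FreeGroup X) :=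
  {w | CyclicallyReduced w ∧ 1 ≤ FreeGroup.norm w ∧
    ∀ x y : X × Bool, y ≠ (x.1, !x.2) →
      |((w.toWord.count x : ℝ) / (FreeGroup.norm w : ℝ)) -
        1 / (2 * (Fintype.card X : ℝ))| < ε ∧
      |(((w.toWord.zip (w.toWord.rotate 1)).count (x, y) : ℝ) / (FreeGroup.norm w : ℝ)) -
        1 / (2 * (Fintype.card X : ℝ) * (2 * (Fintype.card X : ℝ) - 1))| < ε}

open FreeGroup List

namespace S17

variable {X : Type} [DecidableEq X]

/-- letter inverse -/
def linv (a : X × Bool) : X × Bool := (a.1, !a.2)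

omit [DecidableEq X] in
lemma linv_linv (a : X × Bool) : linv (linv a) = a := by simp [linv]

/-- non-cancellation relation: `a` followed by `b` does not cancel -/
def Rel (a b : X × Bool) : Prop := ¬(a.1 = b.1 ∧ a.2 = !b.2)

omit [DecidableEq X] in
lemma rel_iff {a b : X × Bool} : Rel a b ↔ b ≠ linv a := by
  unfold Rel linv
  constructor
  · rintro h rfl
    exact h ⟨rfl, by simp⟩
  · intro h hc
    apply h
    obtain ⟨h1, h2⟩ := hc
    rw [Prod.ext_iff]
    exact ⟨h1.symm, by rw [h2, Bool.not_not]⟩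

omit [DecidableEq X] in
omit [DecidableEq X] in
lemma rel_iff' {a b : X × Bool} : Rel a b ↔ a ≠ linv b := by
  rw [rel_iff]
  constructor
  · intro h hc; apply h; rw [hc, linv_linv]
  · intro h hc; apply h; rw [hc, linv_linv]

lemma rel_symm {a b : X × Bool} (h : Rel a b) : Rel b a := by
  rw [rel_iff] at h ⊢
  intro hc; apply h; rw [hc, linv_linv]

omit [DecidableEq X] in
lemma rel_self (a : X × Bool) : Rel a a := by
  rw [rel_iff]; intro h; apply congrArg Prod.snd at h; simp [linv] at h

lemma reduce_eq_self_of_chain : ∀ {l : List (X × Bool)}, l.Chain' Rel → FreeGroup.reduce l = l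
  | [], _ => rfl
  | [_], _ => rfl
  | a :: b :: t, h => by
    unfold List.Chain' at h; rw [List.isChain_cons_cons] at h
    have ih := reduce_eq_self_of_chain h.2
    rw [FreeGroup.reduce.cons, ih]
    simp only [if_neg h.1]

lemma chain_of_reduce_eq_self : ∀ {l : List (X × Bool)}, FreeGroup.reduce l = l → l.Chain' Rel
  | [], _ => .nil
  | a :: t, h => by
    have h' : (List.casesOn (FreeGroup.reduce t) [a] fun hd tl =>
        if a.1 = hd.1 ∧ a.2 = !hd.2 then tl else a :: hd :: tl) = a :: t := h
    have key : FreeGroup.reduce t = t ∧ ∀ b ∈ t.head?, Rel a b := by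
      rcases hr : FreeGroup.reduce t with _ | ⟨b, v⟩
      · rw [hr] at h'
        change [a] = a :: t at h'
        injection h' with _ h2
        subst h2
        exact ⟨hr, by intro b hb; simp at hb⟩
      · rw [hr] at h'
        change (if a.1 = b.1 ∧ a.2 = !b.2 then v else a :: b :: v) = a :: t at h'
        by_cases hc : a.1 = b.1 ∧ a.2 = !b.2
        · rw [if_pos hc] at h'
          exfalso
          have hle : (FreeGroup.reduce t).length ≤ t.length := FreeGroup.reduce.red.length_le
          rw [hr] at hle
          have := congrArg List.length h'
          simp at hle this
          omega
        · rw [if_neg hc] at h'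
          injection h' with _ h2
          subst h2
          refine ⟨by first | exact hr | rfl | simp [hr], ?_⟩
          intro x hx
          simp at hx
          subst hx
          exact hc
    exact List.isChain_cons.mpr ⟨key.2, chain_of_reduce_eq_self key.1⟩

lemma chain_toWord (w : FreeGroup X) : w.toWord.Chain' Rel :=
  chain_of_reduce_eq_self (FreeGroup.reduce_toWord w)

lemma toWord_mk_of_chain {l : List (X × Bool)} (h : l.Chain' Rel) :
    (FreeGroup.mk l).toWord = l := by
  rw [FreeGroup.toWord_mk, reduce_eq_self_of_chain h]

lemma norm_mk_of_chain {l : List (X × Bool)} (h : l.Chain' Rel) :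
    FreeGroup.norm (FreeGroup.mk l) = l.length := by
  unfold FreeGroup.norm
  rw [toWord_mk_of_chain h]

omit [DecidableEq X] in
lemma linv_inj {a b : X × Bool} (h : linv a = linv b) : a = b := by
  have := congrArg linv h
  rwa [linv_linv, linv_linv] at this

lemma invRev_singleton (c : X × Bool) : FreeGroup.invRev [c] = [linv c] := by
  simp [FreeGroup.invRev, linv]

lemma mk_singleton_inv (c : X × Bool) : (FreeGroup.mk [c])⁻¹ = FreeGroup.mk [linv c] := by
  rw [FreeGroup.inv_mk, invRev_singleton]

/-- `w` is cyclically reduced at the word level -/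
def CRW (w : FreeGroup X) : Prop :=
  ∀ a ∈ w.toWord.head?, ∀ b ∈ w.toWord.getLast?, Rel b a

lemma norm_le_norm_conj : ∀ n (g : FreeGroup X), FreeGroup.norm g ≤ n →
    ∀ w, CRW w → FreeGroup.norm w ≤ FreeGroup.norm (g * w * g⁻¹) := by
  intro n
  induction n with
  | zero =>
    intro g hg w _
    have hg1 : g = 1 := FreeGroup.norm_eq_zero.mp (Nat.le_zero.mp hg)
    simp [hg1]
  | succ n ih =>
    intro g hg w hw
    by_cases h1 : g = 1
    · simp [h1]
    have hlne : g.toWord ≠ [] := fun h => h1 (FreeGroup.toWord_eq_nil_iff.mp h)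
    set l := g.toWord with hldef
    set c := l.getLast hlne with hcdef
    set l' := l.dropLast with hl'def
    have hsplit : l' ++ [c] = l := List.dropLast_append_getLast hlne
    have hchain_l : l.Chain' Rel := chain_toWord g
    have hchain_l' : l'.Chain' Rel := hchain_l.prefix (List.dropLast_prefix l)
    have hglen : FreeGroup.norm g = l.length := rfl
    have hlen' : l'.length + 1 = l.length := by
      have := congrArg List.length hsplit
      simpa using this
    set g' := FreeGroup.mk l' with hg'def
    set xc := FreeGroup.mk [c] with hxcdef
    have hg'le : FreeGroup.norm g' ≤ n := by
      rw [hg'def, norm_mk_of_chain hchain_l']; omega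
    have hgfact : g = g' * xc := by
      rw [hg'def, hxcdef, FreeGroup.mul_mk, hsplit, hldef, FreeGroup.mk_toWord]
    have hconj : g * w * g⁻¹ = g' * (xc * w * xc⁻¹) * g'⁻¹ := by
      rw [hgfact]; group
    rcases hlw : w.toWord with _ | ⟨a, t⟩
    · have hw1 : w = 1 := FreeGroup.toWord_eq_nil_iff.mp hlw
      simp [hw1]
    have hwmk : w = FreeGroup.mk (a :: t) := by rw [← hlw, FreeGroup.mk_toWord]
    have hchain_w : (a :: t).Chain' Rel := by rw [← hlw]; exact chain_toWord w
    have hnormw : FreeGroup.norm w = t.length + 1 := by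
      rw [FreeGroup.norm, hlw]; simp
    set b := (a :: t).getLast (List.cons_ne_nil a t) with hbdef
    have hba : Rel b a := by
      refine hw a ?_ b ?_
      · rw [hlw]; rfl
      · rw [hlw]; exact List.getLast?_eq_getLast_of_ne_nil _
    -- helper to finish recursive cases
    have finish : ∀ lw₁ : List (X × Bool), lw₁.Chain' Rel → lw₁.length = t.length + 1 →
        (∀ a' ∈ lw₁.head?, ∀ b' ∈ lw₁.getLast?, Rel b' a') →
        xc * w * xc⁻¹ = FreeGroup.mk lw₁ →
        FreeGroup.norm w ≤ FreeGroup.norm (g * w * g⁻¹) := by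
      intro lw₁ hch hlen hcrw heq
      have hcrw1 : CRW (FreeGroup.mk lw₁) := by
        intro a' ha' b' hb'
        rw [toWord_mk_of_chain hch] at ha' hb'
        exact hcrw a' ha' b' hb'
      have := ih g' hg'le (FreeGroup.mk lw₁) hcrw1
      rw [norm_mk_of_chain hch, hlen] at this
      rw [hconj, heq, hnormw]
      exact this
    by_cases hca : Rel c a
    · by_cases hbc : b = c
      · -- right cancellation
        set s := (a :: t).dropLast with hsdef
        have hssplit : s ++ [b] = a :: t := List.dropLast_append_getLast _
        have hchain_s : s.Chain' Rel := hchain_w.prefix (List.dropLast_prefix (a :: t))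
        have hchain_sb : (s ++ [b]).Chain' Rel := hssplit ▸ hchain_w
        have heq : xc * w * xc⁻¹ = FreeGroup.mk (b :: s) := by
          calc xc * w * xc⁻¹
              = FreeGroup.mk [b] * FreeGroup.mk (s ++ [b]) * (FreeGroup.mk [b])⁻¹ := by
                rw [hxcdef, hwmk, ← hssplit, ← hbc]
            _ = FreeGroup.mk [b] * FreeGroup.mk s *
                  (FreeGroup.mk [b] * (FreeGroup.mk [b])⁻¹) := by
                rw [← FreeGroup.mul_mk]; group
            _ = FreeGroup.mk ([b] ++ s) := by
                rw [mul_inv_cancel, mul_one, FreeGroup.mul_mk]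
            _ = FreeGroup.mk (b :: s) := rfl
        apply finish (b :: s) ?_ ?_ ?_ heq
        · unfold List.Chain'; rw [List.isChain_cons]
          refine ⟨?_, hchain_s⟩
          intro y hy
          rcases hs : s with _ | ⟨s0, s1⟩
          · rw [hs] at hy; simp at hy
          · have hhs : s.head? = some a := by
              have h5 := congrArg List.head? hssplit
              rwa [List.head?_append_of_ne_nil _ (by rw [hs]; simp), List.head?_cons] at h5
            rw [hhs] at hy
            simp at hy
            subst hy
            exact hba
        · have := congrArg List.length hssplit
          simp at this ⊢
          omega
        · intro a' ha' b' hb'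
          simp only [List.head?_cons, Option.mem_def, Option.some.injEq] at ha'
          subst ha'
          rcases hs : s with _ | ⟨s0, s1⟩
          · rw [hs] at hb'
            simp at hb'
            subst hb'
            exact rel_self b
          · rw [hs, List.getLast?_cons_cons, ← hs] at hb'
            have hj := (List.isChain_append.mp hchain_sb).2.2
            exact hj b' hb' b (by simp)
      · -- no cancellation
        set L := (l ++ (a :: t)) ++ FreeGroup.invRev l with hLdef
        have hchain_inv : (FreeGroup.invRev l).Chain' Rel := by
          have h5 : (g⁻¹).toWord = FreeGroup.invRev l := FreeGroup.toWord_inv g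
          rw [← h5]; exact chain_toWord g⁻¹
        have hhead_inv : (FreeGroup.invRev l).head? = some (linv c) := by
          rw [FreeGroup.invRev, List.head?_reverse, List.getLast?_map,
            List.getLast?_eq_getLast_of_ne_nil hlne]
          rfl
        have hchain_L : L.Chain' Rel := by
          rw [hLdef, List.append_assoc]
          unfold List.Chain'; rw [List.isChain_append]
          refine ⟨hchain_l, ?_, ?_⟩
          · rw [List.isChain_append]
            refine ⟨hchain_w, hchain_inv, ?_⟩
            intro x hx y hy
            rw [List.getLast?_eq_getLast_of_ne_nil (List.cons_ne_nil a t)] at hx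
            simp only [Option.mem_def, Option.some.injEq] at hx
            subst hx
            rw [hhead_inv] at hy
            simp only [Option.mem_def, Option.some.injEq] at hy
            subst hy
            rw [rel_iff]
            intro hcon
            exact hbc (linv_inj hcon).symm
          · intro x hx y hy
            rw [List.getLast?_eq_getLast_of_ne_nil hlne] at hx
            simp only [Option.mem_def, Option.some.injEq] at hx
            subst hx
            simp only [List.head?_append, List.head?_cons] at hy
            simp at hy
            subst hy
            exact hca
        have heqL : g * w * g⁻¹ = FreeGroup.mk L := by
          have hgmk : g = FreeGroup.mk l := by rw [hldef, FreeGroup.mk_toWord]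
          rw [hwmk, hgmk, FreeGroup.inv_mk, FreeGroup.mul_mk, FreeGroup.mul_mk, hLdef]
        rw [heqL, norm_mk_of_chain hchain_L, hnormw, hLdef]
        simp
        omega
    · -- left cancellation
      have ha : a = linv c := by
        rw [rel_iff, not_ne_iff] at hca
        exact hca
      have hxa : FreeGroup.mk [a] = xc⁻¹ := by rw [ha, hxcdef, mk_singleton_inv]
      have heq : xc * w * xc⁻¹ = FreeGroup.mk (t ++ [a]) := by
        calc xc * w * xc⁻¹
            = xc * (xc⁻¹ * FreeGroup.mk t) * xc⁻¹ := by
              rw [hwmk, show (a :: t) = [a] ++ t from rfl, ← FreeGroup.mul_mk, hxa]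
          _ = FreeGroup.mk t * xc⁻¹ := by group
          _ = FreeGroup.mk t * FreeGroup.mk [a] := by rw [← hxa]
          _ = FreeGroup.mk (t ++ [a]) := FreeGroup.mul_mk
      apply finish (t ++ [a]) ?_ ?_ ?_ heq
      · unfold List.Chain'; rw [List.isChain_append]
        refine ⟨hchain_w.tail, List.isChain_singleton a, ?_⟩
        intro x hx y hy
        simp only [List.head?_cons, Option.mem_def, Option.some.injEq] at hy
        subst hy
        rcases ht : t with _ | ⟨t0, t1⟩
        · rw [ht] at hx; simp at hx
        · have hbt : b = t.getLast (by rw [ht]; simp) := by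
            rw [hbdef]
            exact List.getLast_cons _
          rw [List.getLast?_eq_getLast_of_ne_nil (by rw [ht]; simp)] at hx
          simp only [Option.mem_def, Option.some.injEq] at hx
          subst hx
          exact hbt ▸ hba
      · simp
      · intro a' ha' b' hb'
        rw [List.getLast?_concat] at hb'
        simp only [Option.mem_def, Option.some.injEq] at hb'
        subst hb'
        rcases ht : t with _ | ⟨t0, t1⟩
        · rw [ht] at ha'; simp at ha'; subst ha'; exact rel_self a
        · rw [ht, List.head?_append_of_ne_nil _ (by simp), List.head?_cons] at ha'
          simp only [Option.mem_def, Option.some.injEq] at ha'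
          subst ha'
          have := List.isChain_cons_cons.mp (ht ▸ hchain_w)
          exact this.1


lemma cyclicLength_le_norm (w : FreeGroup X) : cyclicLength w ≤ FreeGroup.norm w :=
  Nat.sInf_le ⟨1, by simp⟩

lemma cyclicallyReduced_of_CRW {w : FreeGroup X} (hw : CRW w) : CyclicallyReduced w := by
  unfold CyclicallyReduced cyclicLength
  refine le_antisymm ?_ (cyclicLength_le_norm w)
  refine le_csInf ⟨_, ⟨1, rfl⟩⟩ ?_
  rintro m ⟨gg, rfl⟩
  exact norm_le_norm_conj (FreeGroup.norm gg) gg le_rfl w hw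

lemma strip_of_not_CRW {w : FreeGroup X} (hw : ¬ CRW w) :
    ∃ x u : FreeGroup X, w = x * u * x⁻¹ ∧ FreeGroup.norm x = 1 ∧
      FreeGroup.norm u + 2 = FreeGroup.norm w := by
  unfold CRW at hw
  push_neg at hw
  obtain ⟨a, ha, b, hb, hab⟩ := hw
  have ha2 : a = linv b := by rwa [rel_iff, not_ne_iff] at hab
  rcases hlw : w.toWord with _ | ⟨a0, t⟩
  · rw [hlw] at ha; simp at ha
  rw [hlw] at ha hb
  simp only [List.head?_cons, Option.mem_def, Option.some.injEq] at ha
  subst ha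
  have hchain_w : (a0 :: t).Chain' Rel := hlw ▸ chain_toWord w
  rcases ht : t with _ | ⟨t0, t1⟩
  · rw [ht] at hb
    simp at hb
    subst hb
    exact absurd (rel_iff.mp (rel_self a0)) (by rw [not_ne_iff, ← ha2])
  have htne : t ≠ [] := by rw [ht]; simp
  rw [← ht] at *
  have hb2 : b = t.getLast htne := by
    rw [List.getLast?_eq_getLast_of_ne_nil (List.cons_ne_nil a0 t),
      List.getLast_cons htne] at hb
    simpa using hb.symm
  set m := t.dropLast with hmdef
  have hmsplit : m ++ [b] = t := by rw [hb2]; exact List.dropLast_append_getLast htne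
  have hchain_t : t.Chain' Rel := hchain_w.tail
  have hchain_m : m.Chain' Rel := hchain_t.prefix (List.dropLast_prefix t)
  have hwdecomp : w = FreeGroup.mk [a0] * FreeGroup.mk m * (FreeGroup.mk [a0])⁻¹ := by
    rw [mk_singleton_inv]
    have hba : linv a0 = b := by rw [ha2, linv_linv]
    rw [← FreeGroup.mk_toWord (x := w), hlw, ← hmsplit, ← hba]
    rw [FreeGroup.mul_mk, FreeGroup.mul_mk]
    rfl
  refine ⟨FreeGroup.mk [a0], FreeGroup.mk m, hwdecomp, norm_mk_of_chain (List.isChain_singleton _), ?_⟩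
  rw [norm_mk_of_chain hchain_m]
  have h5 := congrArg List.length hmsplit
  have h6 : FreeGroup.norm w = (a0 :: t).length := by rw [FreeGroup.norm, hlw]
  simp at h5 h6
  omega

lemma crw_one : CRW (1 : FreeGroup X) := by
  intro a ha
  rw [FreeGroup.toWord_one] at ha
  simp at ha

lemma exists_cyclic_decomp (w : FreeGroup X) :
    ∃ g u : FreeGroup X, CyclicallyReduced u ∧ w = g * u * g⁻¹ ∧
      FreeGroup.norm w = 2 * FreeGroup.norm g + FreeGroup.norm u := by
  suffices H : ∀ n (w : FreeGroup X), FreeGroup.norm w ≤ n →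
      ∃ g u : FreeGroup X, CyclicallyReduced u ∧ w = g * u * g⁻¹ ∧
      FreeGroup.norm w = 2 * FreeGroup.norm g + FreeGroup.norm u by
    exact H (FreeGroup.norm w) w le_rfl
  intro n
  induction n with
  | zero =>
    intro w hn
    have : w = 1 := FreeGroup.norm_eq_zero.mp (Nat.le_zero.mp hn)
    subst this
    exact ⟨1, 1, cyclicallyReduced_of_CRW crw_one, by simp, by simp⟩
  | succ n ih =>
    intro w hn
    by_cases hw : CRW w
    · exact ⟨1, w, cyclicallyReduced_of_CRW hw, by simp, by simp⟩
    · obtain ⟨x, u', hdecomp, hx, hu'⟩ := strip_of_not_CRW hw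
      obtain ⟨g, u, hcr, hdec2, hnorm2⟩ := ih u' (by omega)
      refine ⟨x * g, u, hcr, ?_, ?_⟩
      · rw [hdecomp, hdec2]; group
      · have e : w = (x * g) * u * (x * g)⁻¹ := by rw [hdecomp, hdec2]; group
        have h1 : FreeGroup.norm w ≤ 2 * FreeGroup.norm (x * g) + FreeGroup.norm u := by
          calc FreeGroup.norm w = FreeGroup.norm ((x * g) * u * (x * g)⁻¹) := by rw [← e]
            _ ≤ FreeGroup.norm ((x * g) * u) + FreeGroup.norm ((x * g)⁻¹) :=
                FreeGroup.norm_mul_le _ _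
            _ ≤ FreeGroup.norm (x * g) + FreeGroup.norm u + FreeGroup.norm (x * g) := by
                have := FreeGroup.norm_mul_le (x * g) u
                rw [FreeGroup.norm_inv_eq]
                omega
            _ = 2 * FreeGroup.norm (x * g) + FreeGroup.norm u := by ring
        have h2 : FreeGroup.norm (x * g) ≤ 1 + FreeGroup.norm g := by
          have := FreeGroup.norm_mul_le x g
          omega
        omega


/-! ### Counting -/

section Counting

variable [Fintype X]

def ballF' (n : ℕ) : Set (FreeGroup X) := {w | FreeGroup.norm w ≤ n}

lemma ballF_finite (n : ℕ) : (ballF' (X := X) n).Finite := by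
  have h : ballF' (X := X) n ⊆ FreeGroup.toWord ⁻¹' {l | l.length ≤ n} := fun w hw => hw
  exact Set.Finite.subset ((List.finite_length_le _ n).preimage
    (FreeGroup.toWord_injective.injOn)) h

/-- reduced words of length `k` -/
def Lw (k : ℕ) : Set (List (X × Bool)) := {l | l.Chain' Rel ∧ l.length = k}

lemma Lw_finite (k : ℕ) : (Lw (X := X) k).Finite :=
  (List.finite_length_eq _ k).subset (fun l hl => hl.2)

lemma ncard_prod {α β : Type*} (s : Set α) (t : Set β) :
    (s ×ˢ t).ncard = s.ncard * t.ncard := by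
  rw [← Nat.card_coe_set_eq, ← Nat.card_coe_set_eq, ← Nat.card_coe_set_eq,
    Nat.card_congr (Equiv.Set.prod s t), Nat.card_prod]

lemma ncard_biUnion_le {α : Type*} (f : ℕ → Set α) (m : ℕ) :
    (⋃ k ∈ Finset.range m, f k).ncard ≤ ∑ k ∈ Finset.range m, (f k).ncard := by
  induction m with
  | zero => simp
  | succ m ih =>
    rw [Finset.range_add_one, Finset.set_biUnion_insert, Finset.sum_insert (by simp)]
    calc (f m ∪ ⋃ k ∈ Finset.range m, f k).ncard
        ≤ (f m).ncard + (⋃ k ∈ Finset.range m, f k).ncard := Set.ncard_union_le _ _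
      _ ≤ _ := by omega

variable (hX : 2 ≤ Fintype.card X)

section M
variable (X) in
/-- `M = 2N - 1` -/
def Mc : ℕ := 2 * Fintype.card X - 1

include hX

lemma hM3 : 3 ≤ Mc X := by unfold Mc; omega

lemma card_letters : Fintype.card (X × Bool) = Mc X + 1 := by
  rw [Fintype.card_prod, Fintype.card_bool]; unfold Mc; omega

/-- the equivalence between letters and `Fin (M+1)` -/
noncomputable def eL : (X × Bool) ≃ Fin (Mc X + 1) :=
  (Fintype.equivFin _).trans (finCongr (card_letters hX))

/-- index of a letter `a` within the letters different from `linv b` -/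
noncomputable def idx (b a : X × Bool) : Fin (Mc X) :=
  if h : eL hX a ≠ eL hX (linv b) then (finSuccAboveEquiv (eL hX (linv b))).symm ⟨eL hX a, h⟩
  else ⟨0, by have := hM3 hX; omega⟩

lemma idx_inj {b a a' : X × Bool} (ha : a ≠ linv b) (ha' : a' ≠ linv b)
    (h : idx hX b a = idx hX b a') : a = a' := by
  unfold idx at h
  have h1 : eL hX a ≠ eL hX (linv b) := fun hc => ha ((eL hX).injective hc)
  have h2 : eL hX a' ≠ eL hX (linv b) := fun hc => ha' ((eL hX).injective hc)
  rw [dif_pos h1, dif_pos h2] at h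
  have := (finSuccAboveEquiv (eL hX (linv b))).symm.injective h
  have h3 : eL hX a = eL hX a' := congrArg Subtype.val this
  exact (eL hX).injective h3

lemma Lw_one_ncard : (Lw (X := X) 1).ncard ≤ Mc X + 1 := by
  haveI : Inhabited X := ⟨(Fintype.card_pos_iff.mp (by omega)).some⟩
  have himg : List.headI '' (Lw (X := X) 1) ⊆ Set.univ := Set.subset_univ _
  have hinj : Set.InjOn List.headI (Lw (X := X) 1) := by
    intro l hl l' hl' h
    rcases l with _ | ⟨a, t⟩; · simp [Lw] at hl
    rcases l' with _ | ⟨a', t'⟩; · simp [Lw] at hl'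
    have h1 : t = [] := by have := hl.2; simpa using this
    have h2 : t' = [] := by have := hl'.2; simpa using this
    subst h1; subst h2
    simpa using h
  calc (Lw (X := X) 1).ncard = (List.headI '' (Lw (X := X) 1)).ncard :=
        (Set.ncard_image_of_injOn hinj).symm
    _ ≤ (Set.univ : Set (X × Bool)).ncard :=
        Set.ncard_le_ncard himg (Set.finite_univ)
    _ = Mc X + 1 := by rw [Set.ncard_univ, Nat.card_eq_fintype_card, card_letters hX]

/-- decoding map for the induction -/
noncomputable def dec : List (X × Bool) → Fin (Mc X) × List (X × Bool)
  | a :: b :: t => (idx hX b a, b :: t)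
  | _ => (⟨0, by have := hM3 hX; omega⟩, [])

lemma Lw_step (k : ℕ) : (Lw (X := X) (k + 2)).ncard ≤ Mc X * (Lw (X := X) (k + 1)).ncard := by
  have hinj : Set.InjOn (dec hX) (Lw (X := X) (k + 2)) := by
    intro l hl l' hl' h
    rcases l with _ | ⟨a, _ | ⟨b, t⟩⟩
    · simp [Lw] at hl
    · exfalso; have := hl.2; simp at this
    rcases l' with _ | ⟨a', _ | ⟨b', t'⟩⟩
    · simp [Lw] at hl'
    · exfalso; have := hl'.2; simp at this
    unfold dec at h
    have h1 := congrArg Prod.fst h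
    have h2 := congrArg Prod.snd h
    simp only at h1 h2
    injection h2 with hb ht
    subst hb; subst ht
    have ha : a ≠ linv b := rel_iff'.mp (List.isChain_cons_cons.mp hl.1).1
    have ha' : a' ≠ linv b := rel_iff'.mp (List.isChain_cons_cons.mp hl'.1).1
    rw [idx_inj hX ha ha' h1]
  have himg : dec hX '' (Lw (X := X) (k + 2)) ⊆
      (Set.univ : Set (Fin (Mc X))) ×ˢ (Lw (X := X) (k + 1)) := by
    rintro p ⟨l, hl, rfl⟩
    rcases l with _ | ⟨a, _ | ⟨b, t⟩⟩
    · simp [Lw] at hl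
    · exfalso; have := hl.2; simp at this
    unfold dec
    refine ⟨Set.mem_univ _, (List.isChain_cons_cons.mp hl.1).2, ?_⟩
    have := hl.2
    simpa using this
  calc (Lw (X := X) (k + 2)).ncard
      = (dec hX '' (Lw (X := X) (k + 2))).ncard := (Set.ncard_image_of_injOn hinj).symm
    _ ≤ ((Set.univ : Set (Fin (Mc X))) ×ˢ (Lw (X := X) (k + 1))).ncard :=
        Set.ncard_le_ncard himg (Set.finite_univ.prod (Lw_finite _))
    _ = Mc X * (Lw (X := X) (k + 1)).ncard := by
        rw [ncard_prod, Set.ncard_univ, Nat.card_eq_fintype_card, Fintype.card_fin]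


lemma Lw_ncard : ∀ k, (Lw (X := X) k).ncard ≤ (Mc X + 1) * Mc X ^ k := by
  have key : ∀ k, (Lw (X := X) (k + 1)).ncard ≤ (Mc X + 1) * Mc X ^ k := by
    intro k
    induction k with
    | zero => simpa using Lw_one_ncard hX
    | succ k ih =>
      calc (Lw (X := X) (k + 2)).ncard ≤ Mc X * (Lw (X := X) (k + 1)).ncard := Lw_step hX k
        _ ≤ Mc X * ((Mc X + 1) * Mc X ^ k) := Nat.mul_le_mul_left _ ih
        _ = (Mc X + 1) * Mc X ^ (k + 1) := by ring
  intro k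
  cases k with
  | zero =>
    have : (Lw (X := X) 0).ncard ≤ 1 := by
      apply le_trans (Set.ncard_le_ncard (t := {([] : List (X × Bool))}) ?_ (by simp)) (by simp)
      intro l hl
      have := hl.2
      simp_all [List.length_eq_zero_iff]
    calc (Lw (X := X) 0).ncard ≤ 1 := this
      _ ≤ _ := by have h := hM3 hX; simp only [pow_zero, mul_one]; omega
  | succ k =>
    exact le_trans (key k) (Nat.mul_le_mul_left _
      (Nat.pow_le_pow_right (by have := hM3 hX; omega) (by omega)))

lemma sphere_ncard (k : ℕ) : {w : FreeGroup X | FreeGroup.norm w = k}.ncard ≤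
    (Mc X + 1) * Mc X ^ k := by
  have hinj : Set.InjOn FreeGroup.toWord {w : FreeGroup X | FreeGroup.norm w = k} :=
    FreeGroup.toWord_injective.injOn
  have himg : FreeGroup.toWord '' {w : FreeGroup X | FreeGroup.norm w = k} ⊆ Lw (X := X) k :=
    by rintro l ⟨w, hw, rfl⟩; exact ⟨chain_toWord w, hw⟩
  calc {w : FreeGroup X | FreeGroup.norm w = k}.ncard
      = (FreeGroup.toWord '' {w : FreeGroup X | FreeGroup.norm w = k}).ncard :=
        (Set.ncard_image_of_injOn hinj).symm
    _ ≤ (Lw (X := X) k).ncard := Set.ncard_le_ncard himg (Lw_finite k)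
    _ ≤ (Mc X + 1) * Mc X ^ k := Lw_ncard hX k

lemma geom_nat_le (M n : ℕ) (hM : 2 ≤ M) : ∑ k ∈ Finset.range (n + 1), M ^ k ≤ 2 * M ^ n := by
  induction n with
  | zero => simp
  | succ n ih =>
    rw [Finset.sum_range_succ]
    have h1 : M ^ (n + 1) = M * M ^ n := by ring
    have h2 : 2 * M ^ n ≤ M * M ^ n := Nat.mul_le_mul_right _ hM
    calc ∑ k ∈ Finset.range (n + 1), M ^ k + M ^ (n + 1)
        ≤ 2 * M ^ n + M ^ (n + 1) := by omega
      _ ≤ 2 * M ^ (n + 1) := by rw [h1]; omega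

lemma ball_ncard_le (n : ℕ) :
    (ballF' (X := X) n).ncard ≤ 2 * (Mc X + 1) * Mc X ^ n := by
  have hcover : ballF' (X := X) n ⊆
      ⋃ k ∈ Finset.range (n + 1), {w : FreeGroup X | FreeGroup.norm w = k} := by
    intro w hw
    simp only [Set.mem_iUnion, Finset.mem_range]
    exact ⟨FreeGroup.norm w, Nat.lt_succ_of_le hw, rfl⟩
  calc (ballF' (X := X) n).ncard
      ≤ (⋃ k ∈ Finset.range (n + 1), {w : FreeGroup X | FreeGroup.norm w = k}).ncard := by
        refine Set.ncard_le_ncard hcover ?_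
        refine Set.Finite.biUnion (Finset.range (n + 1)).finite_toSet ?_
        intro k _
        exact (ballF_finite k).subset (fun w hw => le_of_eq hw)
    _ ≤ ∑ k ∈ Finset.range (n + 1), {w : FreeGroup X | FreeGroup.norm w = k}.ncard :=
        ncard_biUnion_le _ _
    _ ≤ ∑ k ∈ Finset.range (n + 1), (Mc X + 1) * Mc X ^ k :=
        Finset.sum_le_sum (fun k _ => sphere_ncard hX k)
    _ = (Mc X + 1) * ∑ k ∈ Finset.range (n + 1), Mc X ^ k := by rw [Finset.mul_sum]
    _ ≤ (Mc X + 1) * (2 * Mc X ^ n) :=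
        Nat.mul_le_mul_left _ (geom_nat_le hX (Mc X) n (by have := hM3 hX; omega))
    _ = 2 * (Mc X + 1) * Mc X ^ n := by ring

/-- word builder: given a transition function, build a word from a list of indices -/
def build {m : ℕ} (f : (X × Bool) → Fin m → (X × Bool)) :
    (X × Bool) → List (Fin m) → List (X × Bool)
  | _, [] => []
  | prev, i :: v => f prev i :: build f (f prev i) v

omit [DecidableEq X] hX in
lemma build_length {m : ℕ} (f : (X × Bool) → Fin m → (X × Bool)) :
    ∀ (v : List (Fin m)) (prev), (build f prev v).length = v.length
  | [], _ => rfl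
  | _ :: v, prev => by
    unfold build
    simp [build_length f v]

omit [DecidableEq X] hX in
lemma build_chain {m : ℕ} (f : (X × Bool) → Fin m → (X × Bool))
    (hne : ∀ a i, f a i ≠ linv a) :
    ∀ (v : List (Fin m)) (prev), (build f prev v).Chain' Rel ∧
      ∀ y ∈ (build f prev v).head?, y ≠ linv prev
  | [], prev => by unfold build; exact ⟨.nil, by simp⟩
  | i :: v, prev => by
    obtain ⟨ih1, ih2⟩ := build_chain f hne v (f prev i)
    unfold build
    refine ⟨List.isChain_cons.mpr ⟨?_, ih1⟩, ?_⟩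
    · intro y hy
      rw [rel_iff]
      exact ih2 y hy
    · intro y hy
      simp only [List.head?_cons, Option.mem_def, Option.some.injEq] at hy
      subst hy
      exact hne prev i

omit [DecidableEq X] hX in
lemma build_inj {m : ℕ} (f : (X × Bool) → Fin m → (X × Bool))
    (hinj : ∀ a, Function.Injective (f a)) :
    ∀ (v w : List (Fin m)) (prev), build f prev v = build f prev w → v = w
  | [], [], _, _ => rfl
  | [], _ :: _, _, h => by exfalso; rw [show build f _ [] = [] from rfl] at h; simp [build] at h
  | _ :: _, [], _, h => by exfalso; rw [show build f _ [] = [] from rfl] at h; simp [build] at h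
  | i :: v, j :: w, prev, h => by
    unfold build at h
    injection h with h1 h2
    have hij : i = j := hinj prev h1
    subst hij
    rw [build_inj f hinj v w (f prev i) h2]

/-- transition embedding avoiding the inverse of the previous letter -/
noncomputable def emb : (X × Bool) → Fin (Mc X) → (X × Bool) :=
  fun a i => (eL hX).symm ((eL hX (linv a)).succAbove i)

lemma emb_ne (a : X × Bool) (i : Fin (Mc X)) : emb hX a i ≠ linv a := by
  unfold emb
  intro h
  have := congrArg (eL hX) h
  rw [Equiv.apply_symm_apply] at this
  exact Fin.succAbove_ne _ i this

lemma emb_inj (a : X × Bool) : Function.Injective (emb hX a) := by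
  intro i j h
  unfold emb at h
  have := (eL hX).symm.injective h
  exact Fin.succAbove_right_injective this

lemma ball_ncard_ge (n : ℕ) : Mc X ^ n ≤ (ballF' (X := X) n).ncard := by
  haveI : Inhabited X := ⟨(Fintype.card_pos_iff.mp (by omega)).some⟩
  set a₀ : X × Bool := default with ha₀
  set Ψ : (Fin n → Fin (Mc X)) → FreeGroup X :=
    fun vf => FreeGroup.mk (build (emb hX) a₀ (List.ofFn vf)) with hΨ
  have hchain : ∀ vf : Fin n → Fin (Mc X), (build (emb hX) a₀ (List.ofFn vf)).Chain' Rel :=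
    fun vf => (build_chain (emb hX) (emb_ne hX) _ a₀).1
  have hΨinj : Function.Injective Ψ := by
    intro vf vg h
    rw [hΨ] at h
    simp only at h
    have h2 : build (emb hX) a₀ (List.ofFn vf) = build (emb hX) a₀ (List.ofFn vg) := by
      have := congrArg FreeGroup.toWord h
      rwa [toWord_mk_of_chain (hchain vf), toWord_mk_of_chain (hchain vg)] at this
    exact List.ofFn_injective (build_inj (emb hX) (emb_inj hX) _ _ a₀ h2)
  have hrange : Set.range Ψ ⊆ ballF' (X := X) n := by
    rintro w ⟨vf, rfl⟩
    show FreeGroup.norm _ ≤ n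
    rw [hΨ]
    simp only
    rw [norm_mk_of_chain (hchain vf), build_length, List.length_ofFn]
  calc Mc X ^ n = Nat.card (Fin n → Fin (Mc X)) := by
        rw [Nat.card_fun, Nat.card_eq_fintype_card, Nat.card_eq_fintype_card,
          Fintype.card_fin, Fintype.card_fin]
    _ = (Set.range Ψ).ncard := by
        rw [← Nat.card_coe_set_eq, Nat.card_range_of_injective hΨinj]
    _ ≤ (ballF' (X := X) n).ncard := Set.ncard_le_ncard hrange (ballF_finite n)

def cyclicPreimage' (S : Set (FreeGroup X)) : Set (FreeGroup X) :=
  {w | ∃ g u : FreeGroup X, u ∈ S ∧ CyclicallyReduced u ∧ w = g * u * g⁻¹ ∧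
    FreeGroup.norm w = 2 * FreeGroup.norm g + FreeGroup.norm u}

omit hX in
lemma bad_count (S : Set (FreeGroup X)) (n : ℕ) :
    ((Set.univ \ cyclicPreimage' S) ∩ ballF' (X := X) n).ncard ≤
      ∑ k ∈ Finset.range (n / 2 + 1),
        {g : FreeGroup X | FreeGroup.norm g = k}.ncard *
        (({w : FreeGroup X | CyclicallyReduced w} \ S) ∩ ballF' (X := X) (n - 2 * k)).ncard := by
  classical
  set φ : FreeGroup X → FreeGroup X × FreeGroup X :=
    fun w => ((exists_cyclic_decomp w).choose, (exists_cyclic_decomp w).choose_spec.choose)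
    with hφ
  have hspec : ∀ w : FreeGroup X, CyclicallyReduced (φ w).2 ∧
      w = (φ w).1 * (φ w).2 * (φ w).1⁻¹ ∧
      FreeGroup.norm w = 2 * FreeGroup.norm (φ w).1 + FreeGroup.norm (φ w).2 :=
    fun w => (exists_cyclic_decomp w).choose_spec.choose_spec
  have hinj : Set.InjOn φ ((Set.univ \ cyclicPreimage' S) ∩ ballF' (X := X) n) := by
    intro w _ w' _ h
    have h1 := (hspec w).2.1
    have h2 := (hspec w').2.1
    rw [h1, h2, h]
  set U := ⋃ k ∈ Finset.range (n / 2 + 1),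
      ({g : FreeGroup X | FreeGroup.norm g = k} ×ˢ
        (({w : FreeGroup X | CyclicallyReduced w} \ S) ∩ ballF' (X := X) (n - 2 * k)))
    with hU
  have himg : φ '' ((Set.univ \ cyclicPreimage' S) ∩ ballF' (X := X) n) ⊆ U := by
    rintro p ⟨w, ⟨⟨_, hnotS'⟩, hball⟩, rfl⟩
    obtain ⟨hcr, hdec, hnorm⟩ := hspec w
    have huS : (φ w).2 ∉ S := by
      intro hus
      exact hnotS' ⟨(φ w).1, (φ w).2, hus, hcr, hdec, hnorm⟩
    have hball' : FreeGroup.norm w ≤ n := hball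
    rw [hU]
    simp only [Set.mem_iUnion, Finset.mem_range]
    refine ⟨FreeGroup.norm (φ w).1, ?_, rfl, ⟨hcr, huS⟩, ?_⟩
    · have : 2 * FreeGroup.norm (φ w).1 ≤ n := by omega
      omega
    · show FreeGroup.norm (φ w).2 ≤ n - 2 * FreeGroup.norm (φ w).1
      omega
  have hUfin : ∀ k, ({g : FreeGroup X | FreeGroup.norm g = k} ×ˢ
      (({w : FreeGroup X | CyclicallyReduced w} \ S) ∩ ballF' (X := X) (n - 2 * k))).Finite := by
    intro k
    refine Set.Finite.prod ((ballF_finite k).subset (fun g hg => le_of_eq hg)) ?_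
    exact (ballF_finite (n - 2 * k)).subset (fun w hw => hw.2)
  calc ((Set.univ \ cyclicPreimage' S) ∩ ballF' (X := X) n).ncard
      = (φ '' ((Set.univ \ cyclicPreimage' S) ∩ ballF' (X := X) n)).ncard :=
        (Set.ncard_image_of_injOn hinj).symm
    _ ≤ U.ncard := by
        refine Set.ncard_le_ncard himg ?_
        rw [hU]
        exact Set.Finite.biUnion (Finset.range (n / 2 + 1)).finite_toSet (fun k _ => hUfin k)
    _ ≤ ∑ k ∈ Finset.range (n / 2 + 1),
          ({g : FreeGroup X | FreeGroup.norm g = k} ×ˢ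
            (({w : FreeGroup X | CyclicallyReduced w} \ S) ∩
              ballF' (X := X) (n - 2 * k))).ncard := by
        rw [hU]; exact ncard_biUnion_le _ _
    _ = _ := by
        refine Finset.sum_congr rfl (fun k _ => ?_)
        rw [ncard_prod]

omit [DecidableEq X] [Fintype X] hX in
lemma geom_sum_real_le {r : ℝ} (h0 : 0 ≤ r) (h1 : r ≤ 25 / 48) (m : ℕ) :
    ∑ k ∈ Finset.range m, r ^ k ≤ 3 := by
  induction m with
  | zero => norm_num
  | succ m ih =>
    rw [geom_sum_succ]
    have hnn : 0 ≤ ∑ k ∈ Finset.range m, r ^ k :=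
      Finset.sum_nonneg (fun k _ => pow_nonneg h0 k)
    nlinarith [mul_le_mul h1 ih hnn (by norm_num : (0:ℝ) ≤ 25 / 48)]

theorem main17 (S : Set (FreeGroup X))
    (hbound : ∃ C : ℝ, 0 < C ∧ ∃ s : ℝ, 0 < s ∧ s < 1 ∧ ∀ n : ℕ,
      ((({w : FreeGroup X | CyclicallyReduced w} \ S) ∩ ballF' (X := X) n).ncard : ℝ) ≤
        C * s ^ n * ((({w : FreeGroup X | CyclicallyReduced w} ∩ ballF' (X := X) n)).ncard : ℝ)) :
    ∃ C : ℝ, 0 < C ∧ ∃ s : ℝ, 0 < s ∧ s < 1 ∧ ∀ n : ℕ,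
      (((Set.univ \ cyclicPreimage' S) ∩ ballF' (X := X) n).ncard : ℝ) ≤
        C * s ^ n * (((Set.univ ∩ ballF' (X := X) n)).ncard : ℝ) := by
  classical
  obtain ⟨C₀, hC₀, s₀, hs₀pos, hs₀lt, hb⟩ := hbound
  have hM : 3 ≤ Mc X := hM3 hX
  have hM0 : (0:ℝ) < (Mc X : ℝ) := by exact_mod_cast Nat.lt_of_lt_of_le (by norm_num) hM
  set s : ℝ := max s₀ (4 / 5) with hsdef
  have hs45 : (4:ℝ) / 5 ≤ s := le_max_right _ _
  have hspos : (0:ℝ) < s := by linarith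
  have hslt1 : s < 1 := max_lt hs₀lt (by norm_num)
  have hs₀le : s₀ ≤ s := le_max_left _ _
  set r : ℝ := ((Mc X : ℝ) * s ^ 2)⁻¹ with hrdef
  have hr0 : (0:ℝ) ≤ r := by positivity
  have hrle : r ≤ 25 / 48 := by
    have hM3R : (3:ℝ) ≤ (Mc X : ℝ) := by exact_mod_cast hM
    have h1 : (48:ℝ) / 25 ≤ (Mc X : ℝ) * s ^ 2 := by
      nlinarith [sq_nonneg (s - 4 / 5), mul_nonneg (sub_nonneg.mpr hM3R) (sq_nonneg s)]
    calc r ≤ ((48:ℝ) / 25)⁻¹ := by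
          rw [hrdef]
          exact inv_anti₀ (by norm_num) h1
      _ = 25 / 48 := by norm_num
  refine ⟨6 * C₀ * ((Mc X : ℝ) + 1) ^ 2, by positivity, s, hspos, hslt1, ?_⟩
  intro n
  rw [Set.univ_inter]
  have h1 := bad_count (X := X) S n
  have h1R : (((Set.univ \ cyclicPreimage' S) ∩ ballF' (X := X) n).ncard : ℝ) ≤
      ∑ k ∈ Finset.range (n / 2 + 1),
        ({g : FreeGroup X | FreeGroup.norm g = k}.ncard : ℝ) *
        ((({w : FreeGroup X | CyclicallyReduced w} \ S) ∩
          ballF' (X := X) (n - 2 * k)).ncard : ℝ) := by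
    calc (((Set.univ \ cyclicPreimage' S) ∩ ballF' (X := X) n).ncard : ℝ)
        ≤ ((∑ k ∈ Finset.range (n / 2 + 1),
            {g : FreeGroup X | FreeGroup.norm g = k}.ncard *
            (({w : FreeGroup X | CyclicallyReduced w} \ S) ∩
              ballF' (X := X) (n - 2 * k)).ncard : ℕ) : ℝ) := by exact_mod_cast h1
      _ = _ := by push_cast; rfl
  have hterm : ∀ k ∈ Finset.range (n / 2 + 1),
      ({g : FreeGroup X | FreeGroup.norm g = k}.ncard : ℝ) *
        ((({w : FreeGroup X | CyclicallyReduced w} \ S) ∩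
          ballF' (X := X) (n - 2 * k)).ncard : ℝ) ≤
      (2 * C₀ * ((Mc X : ℝ) + 1) ^ 2) * ((Mc X : ℝ) ^ n * s ^ n) * r ^ k := by
    intro k hk
    rw [Finset.mem_range] at hk
    have h2k : 2 * k ≤ n := by omega
    have hE : ({g : FreeGroup X | FreeGroup.norm g = k}.ncard : ℝ) ≤
        ((Mc X : ℝ) + 1) * (Mc X : ℝ) ^ k := by exact_mod_cast sphere_ncard hX k
    have hF : ((({w : FreeGroup X | CyclicallyReduced w} \ S) ∩
        ballF' (X := X) (n - 2 * k)).ncard : ℝ) ≤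
        C₀ * s ^ (n - 2 * k) * (2 * ((Mc X : ℝ) + 1) * (Mc X : ℝ) ^ (n - 2 * k)) := by
      calc ((({w : FreeGroup X | CyclicallyReduced w} \ S) ∩
          ballF' (X := X) (n - 2 * k)).ncard : ℝ)
          ≤ C₀ * s₀ ^ (n - 2 * k) *
            ((({w : FreeGroup X | CyclicallyReduced w} ∩
              ballF' (X := X) (n - 2 * k))).ncard : ℝ) := hb (n - 2 * k)
        _ ≤ C₀ * s ^ (n - 2 * k) * ((ballF' (X := X) (n - 2 * k)).ncard : ℝ) := by
            apply mul_le_mul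
            · apply mul_le_mul le_rfl (pow_le_pow_left₀ hs₀pos.le hs₀le _) (by positivity) hC₀.le
            · exact_mod_cast Nat.cast_le.mpr (Set.ncard_le_ncard Set.inter_subset_right
                (ballF_finite _))
            · positivity
            · positivity
        _ ≤ C₀ * s ^ (n - 2 * k) * (2 * ((Mc X : ℝ) + 1) * (Mc X : ℝ) ^ (n - 2 * k)) := by
            apply mul_le_mul le_rfl ?_ (by positivity) (by positivity)
            calc ((ballF' (X := X) (n - 2 * k)).ncard : ℝ)
                ≤ ((2 * (Mc X + 1) * Mc X ^ (n - 2 * k) : ℕ) : ℝ) := by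
                  exact_mod_cast ball_ncard_le hX (n - 2 * k)
              _ = 2 * ((Mc X : ℝ) + 1) * (Mc X : ℝ) ^ (n - 2 * k) := by push_cast; ring
    have hkey : (Mc X : ℝ) ^ n * s ^ n * r ^ k =
        (Mc X : ℝ) ^ (n - k) * s ^ (n - 2 * k) := by
      have hMk : (Mc X : ℝ) ^ (n - k) * (Mc X : ℝ) ^ k = (Mc X : ℝ) ^ n := by
        rw [← pow_add]; congr 1; omega
      have hsk : s ^ (n - 2 * k) * (s ^ 2) ^ k = s ^ n := by
        rw [← pow_mul, ← pow_add]; congr 1; omega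
      rw [hrdef, ← hMk, ← hsk, inv_pow, mul_pow]
      have hMne : ((Mc X : ℝ) ^ k) ≠ 0 := by positivity
      have hsne : (((s : ℝ) ^ 2) ^ k) ≠ 0 := by positivity
      field_simp
    calc ({g : FreeGroup X | FreeGroup.norm g = k}.ncard : ℝ) *
          ((({w : FreeGroup X | CyclicallyReduced w} \ S) ∩
            ballF' (X := X) (n - 2 * k)).ncard : ℝ)
        ≤ (((Mc X : ℝ) + 1) * (Mc X : ℝ) ^ k) *
          (C₀ * s ^ (n - 2 * k) * (2 * ((Mc X : ℝ) + 1) * (Mc X : ℝ) ^ (n - 2 * k))) := by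
          apply mul_le_mul hE hF (by positivity) (by positivity)
      _ = (2 * C₀ * ((Mc X : ℝ) + 1) ^ 2) * ((Mc X : ℝ) ^ (n - k) * s ^ (n - 2 * k)) := by
          rw [show (Mc X : ℝ) ^ (n - k) = (Mc X : ℝ) ^ k * (Mc X : ℝ) ^ (n - 2 * k) by
            rw [← pow_add]; congr 1; omega]
          ring
      _ = (2 * C₀ * ((Mc X : ℝ) + 1) ^ 2) * ((Mc X : ℝ) ^ n * s ^ n) * r ^ k := by
          rw [mul_assoc ((2:ℝ) * C₀ * ((Mc X : ℝ) + 1) ^ 2), hkey]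
  calc (((Set.univ \ cyclicPreimage' S) ∩ ballF' (X := X) n).ncard : ℝ)
      ≤ ∑ k ∈ Finset.range (n / 2 + 1),
          ({g : FreeGroup X | FreeGroup.norm g = k}.ncard : ℝ) *
          ((({w : FreeGroup X | CyclicallyReduced w} \ S) ∩
            ballF' (X := X) (n - 2 * k)).ncard : ℝ) := h1R
    _ ≤ ∑ k ∈ Finset.range (n / 2 + 1),
          (2 * C₀ * ((Mc X : ℝ) + 1) ^ 2) * ((Mc X : ℝ) ^ n * s ^ n) * r ^ k :=
        Finset.sum_le_sum hterm
    _ = (2 * C₀ * ((Mc X : ℝ) + 1) ^ 2) * ((Mc X : ℝ) ^ n * s ^ n) *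
          ∑ k ∈ Finset.range (n / 2 + 1), r ^ k := by rw [Finset.mul_sum]
    _ ≤ (2 * C₀ * ((Mc X : ℝ) + 1) ^ 2) * ((Mc X : ℝ) ^ n * s ^ n) * 3 := by
        apply mul_le_mul le_rfl (geom_sum_real_le hr0 hrle _) ?_ (by positivity)
        exact Finset.sum_nonneg (fun k _ => pow_nonneg hr0 k)
    _ = (6 * C₀ * ((Mc X : ℝ) + 1) ^ 2) * s ^ n * (Mc X : ℝ) ^ n := by ring
    _ ≤ (6 * C₀ * ((Mc X : ℝ) + 1) ^ 2) * s ^ n * ((ballF' (X := X) n).ncard : ℝ) := by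
        apply mul_le_mul le_rfl ?_ (by positivity) (by positivity)
        exact_mod_cast Nat.cast_le.mpr (ball_ncard_ge hX n)
end M
end Counting
end S17

/-- if S ⊆ C is exponentially C-generic (C the cyclically reduced
elements), then S' = {w : the cyclic reduction of w lies in S} is exponentially
F(X)-generic. -/



theorem statement17 (X : Type) [Fintype X] [DecidableEq X] (hX : 2 ≤ Fintype.card X)
    (S : Set (FreeGroup X)) (hS : S ⊆ {w : FreeGroup X | CyclicallyReduced w})
    (hgen : ExpGeneric S {w : FreeGroup X | CyclicallyReduced w}) :
    ExpGeneric (cyclicPreimage S) (Set.univ : Set (FreeGroup X)) := by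
  exact S17.main17 hX S hgen
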